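/- arXiv:1702.06867 — 2 statements merged into one kernel-verified Lean document; each statement's English description precedes it below -/
import Mathlib

section
/- Let 0 < s < 1 and 0 < α < 2s. There exists a constant C > 0 (depending only on s and α) such that for every integer n ≥ 4 one has ∑_{k+l=n, k≥2, l≥2} (μ_{k,l})² · l^{3/2+α} · k^{3/2+α} ≤ C · n^{2s+3/2+α}. -/
open Real MeasureTheory Finset

/-- The coefficients `μ_{k,l}` in the expansion `Γ(φ_k, φ_l) = μ_{k,l} φ_{k+l}` of the
radially symmetric non-cutoff Boltzmann collision operator, for the model angular kernel
`β(θ) = (sin θ)^{-1-2s} cos θ`. -/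
noncomputable def boltzMu (s : ℝ) (k l : ℕ) : ℝ :=
  Real.sqrt ((Nat.factorial (2 * k + 2 * l + 1) : ℝ) /
      ((Nat.factorial (2 * k + 1) : ℝ) * (Nat.factorial (2 * l + 1) : ℝ))) *
    ∫ θ in (0:ℝ)..(Real.pi / 4),
      Real.sin θ ^ (2 * (k : ℝ) - 1 - 2 * s) * Real.cos θ ^ (2 * l + 1)

noncomputable def cb (m : ℕ) : ℝ :=
  4 ^ m * (Nat.factorial m : ℝ) ^ 2 / (Nat.factorial (2 * m) : ℝ)

lemma cb_pos (m : ℕ) : 0 < cb m := by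
  unfold cb
  positivity

lemma cb_succ (m : ℕ) : cb (m + 1) = cb m * (2 * m + 2) / (2 * m + 1) := by
  unfold cb
  have h1 : 2 * (m + 1) = 2 * m + 1 + 1 := by ring
  rw [h1, Nat.factorial_succ, Nat.factorial_succ, Nat.factorial_succ]
  push_cast
  have h2 : (Nat.factorial (2 * m) : ℝ) ≠ 0 := by positivity
  have h3 : (2 * (m:ℝ) + 1) ≠ 0 := by positivity
  field_simp
  ring

lemma cb_sq_le (m : ℕ) (hm : 1 ≤ m) : (cb m) ^ 2 ≤ 4 * m := by
  induction m with
  | zero => omega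
  | succ n ih =>
    rcases Nat.eq_or_lt_of_le hm with h | h
    · have : n = 0 := by omega
      subst this
      norm_num [cb, Nat.factorial]
    · have hn : 1 ≤ n := by omega
      have hcn := ih hn
      rw [cb_succ]
      have h1 : (2 * (n:ℝ) + 1) ≠ 0 := by positivity
      rw [div_pow, mul_pow, div_le_iff₀ (by positivity)]
      have key : (cb n)^2 * (2 * (n:ℝ) + 2)^2 ≤ 4 * n * (2 * n + 2)^2 := by
        apply mul_le_mul_of_nonneg_right hcn (by positivity)
      refine key.trans ?_
      have : (4:ℝ) * n * (2 * n + 2)^2 ≤ 4 * (↑n + 1) * (2 * n + 1)^2 := by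
        nlinarith [Nat.cast_nonneg (α := ℝ) n]
      push_cast
      linarith

lemma le_cb_sq (m : ℕ) : (m : ℝ) ≤ (cb m) ^ 2 := by
  have h : ∀ m : ℕ, 3 * (m:ℝ) + 1 ≤ (cb m)^2 := by
    intro m
    induction m with
    | zero => norm_num [cb, Nat.factorial]
    | succ n ih =>
      rw [cb_succ]
      have h1 : (0:ℝ) < 2 * (n:ℝ) + 1 := by positivity
      rw [div_pow, mul_pow, le_div_iff₀ (by positivity)]
      have key : (3 * (n:ℝ) + 1) * (2 * n + 2)^2 ≤ (cb n)^2 * (2 * (n:ℝ) + 2)^2 := by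
        apply mul_le_mul_of_nonneg_right ih (by positivity)
      refine le_trans ?_ key
      push_cast
      nlinarith [Nat.cast_nonneg (α := ℝ) n]
  calc (m:ℝ) ≤ 3 * m + 1 := by nlinarith [Nat.cast_nonneg (α := ℝ) m]
  _ ≤ _ := h m

lemma cb_le (m : ℕ) (hm : 1 ≤ m) : cb m ≤ 2 * Real.sqrt m := by
  have h := cb_sq_le m hm
  have h2 : cb m = Real.sqrt ((cb m)^2) := by
    rw [Real.sqrt_sq (cb_pos m).le]
  rw [h2]
  calc Real.sqrt ((cb m)^2) ≤ Real.sqrt (4 * m) := Real.sqrt_le_sqrt h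
  _ = 2 * Real.sqrt m := by
      rw [show (4:ℝ) * m = 2^2 * m by norm_num, Real.sqrt_mul (by positivity),
        Real.sqrt_sq (by norm_num)]

lemma sqrt_le_cb (m : ℕ) : Real.sqrt m ≤ cb m := by
  have h := le_cb_sq m
  calc Real.sqrt m ≤ Real.sqrt ((cb m)^2) := Real.sqrt_le_sqrt h
  _ = cb m := Real.sqrt_sq (cb_pos m).le

lemma G_identity (k l : ℕ) (hk : 1 ≤ k) :
    (Nat.factorial (2*k+2*l+1) : ℝ) / ((Nat.factorial (2*k+1)) * (Nat.factorial (2*l+1)))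
      * ((Nat.factorial l * Nat.factorial (k-1)) / Nat.factorial (k+l))^2
    = (2*(k+l)+1) * cb k * cb l / (cb (k+l) * (2*k+1) * (2*l+1) * (k:ℝ)^2) := by
  have e1 : ((Nat.factorial (2*(k+l))) : ℝ) = 4^(k+l) * (Nat.factorial (k+l))^2 / cb (k+l) := by
    rw [cb]; field_simp
  have e2 : ((Nat.factorial (2*k)) : ℝ) = 4^k * (Nat.factorial k)^2 / cb k := by
    rw [cb]; field_simp
  have e3 : ((Nat.factorial (2*l)) : ℝ) = 4^l * (Nat.factorial l)^2 / cb l := by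
    rw [cb]; field_simp
  have e4 : ((Nat.factorial (k-1)) : ℝ) = (Nat.factorial k : ℝ) / k := by
    have h5 : k * Nat.factorial (k-1) = Nat.factorial k := Nat.mul_factorial_pred (by omega)
    rw [eq_div_iff (by positivity), mul_comm]
    exact_mod_cast congrArg (Nat.cast (R := ℝ)) h5
  have e5 : 2*k+2*l+1 = 2*(k+l) + 1 := by omega
  rw [e5, Nat.factorial_succ, show 2*k+1 = (2*k)+1 from rfl, Nat.factorial_succ,
    show 2*l+1 = (2*l)+1 from rfl, Nat.factorial_succ]
  push_cast
  rw [e1, e2, e3, e4]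
  have nk : (Nat.factorial k : ℝ) ≠ 0 := by positivity
  have nl : (Nat.factorial l : ℝ) ≠ 0 := by positivity
  have nn : (Nat.factorial (k+l) : ℝ) ≠ 0 := by positivity
  have ck := (cb_pos k).ne'
  have cl := (cb_pos l).ne'
  have cn := (cb_pos (k+l)).ne'
  have hkr : (k:ℝ) ≠ 0 := by positivity
  have h2k : (2*(k:ℝ)+1) ≠ 0 := by positivity
  have h2l : (2*(l:ℝ)+1) ≠ 0 := by positivity
  field_simp
  push_cast
  ring

lemma G_bound (k l : ℕ) (hk : 1 ≤ k) (hl : 1 ≤ l) :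
    (2*((k:ℝ)+l)+1) * cb k * cb l / (cb (k+l) * (2*(k:ℝ)+1) * (2*(l:ℝ)+1) * (k:ℝ)^2)
      ≤ 3 * Real.sqrt (k+l) / ((k:ℝ)^2 * Real.sqrt k * Real.sqrt l) := by
  have hkr : (1:ℝ) ≤ (k:ℝ) := by exact_mod_cast hk
  have hlr : (1:ℝ) ≤ (l:ℝ) := by exact_mod_cast hl
  have hsk : 0 < Real.sqrt k := Real.sqrt_pos.mpr (by linarith)
  have hsl : 0 < Real.sqrt l := Real.sqrt_pos.mpr (by linarith)
  have hsn : 0 < Real.sqrt ((k:ℝ)+l) := Real.sqrt_pos.mpr (by linarith)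
  have hck := cb_le k hk
  have hcl := cb_le l hl
  have hcn : Real.sqrt ((k:ℝ)+l) ≤ cb (k+l) := by
    have := sqrt_le_cb (k+l)
    rwa [Nat.cast_add] at this
  have h1 : (2*((k:ℝ)+l)+1) ≤ 3*((k:ℝ)+l) := by linarith
  have hnum : (2*((k:ℝ)+l)+1) * cb k * cb l
      ≤ 3*((k:ℝ)+l) * (2*Real.sqrt k) * (2*Real.sqrt l) :=
    mul_le_mul (mul_le_mul h1 hck (cb_pos k).le (by positivity)) hcl (cb_pos l).le
      (by positivity)
  have hden : Real.sqrt ((k:ℝ)+l) * (2*(k:ℝ)) * (2*(l:ℝ)) * (k:ℝ)^2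
      ≤ cb (k+l) * (2*(k:ℝ)+1) * (2*(l:ℝ)+1) * (k:ℝ)^2 := by
    have i1 : Real.sqrt ((k:ℝ)+l) * (2*(k:ℝ)) ≤ cb (k+l) * (2*(k:ℝ)+1) :=
      mul_le_mul hcn (by linarith) (by positivity) (cb_pos _).le
    have i2 : Real.sqrt ((k:ℝ)+l) * (2*(k:ℝ)) * (2*(l:ℝ))
        ≤ cb (k+l) * (2*(k:ℝ)+1) * (2*(l:ℝ)+1) :=
      mul_le_mul i1 (by linarith) (by positivity)
        (mul_nonneg (cb_pos _).le (by positivity))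
    exact mul_le_mul_of_nonneg_right i2 (by positivity)
  have step : (2*((k:ℝ)+l)+1) * cb k * cb l / (cb (k+l) * (2*(k:ℝ)+1) * (2*(l:ℝ)+1) * (k:ℝ)^2)
      ≤ 3*((k:ℝ)+l) * (2*Real.sqrt k) * (2*Real.sqrt l)
        / (Real.sqrt ((k:ℝ)+l) * (2*(k:ℝ)) * (2*(l:ℝ)) * (k:ℝ)^2) := by
    apply div_le_div₀ (by positivity) hnum (by positivity) hden
  refine step.trans (le_of_eq ?_)
  have e1 : Real.sqrt (k:ℝ) * Real.sqrt (k:ℝ) = (k:ℝ) := Real.mul_self_sqrt (by linarith)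
  have e2 : Real.sqrt (l:ℝ) * Real.sqrt (l:ℝ) = (l:ℝ) := Real.mul_self_sqrt (by linarith)
  have e3 : Real.sqrt ((k:ℝ)+l) * Real.sqrt ((k:ℝ)+l) = (k:ℝ)+l :=
    Real.mul_self_sqrt (by linarith)
  rw [div_eq_div_iff (by positivity) (by positivity)]
  linear_combination (12*((k:ℝ)+(l:ℝ))*(k:ℝ)^2*(Real.sqrt l * Real.sqrt l)) * e1
    + (12*((k:ℝ)+(l:ℝ))*(k:ℝ)^3) * e2 + (-(12*(k:ℝ)^3*(l:ℝ))) * e3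

lemma cont_rpow {a : ℝ} (ha : 0 < a) : Continuous (fun u : ℝ => u ^ a) :=
  continuous_iff_continuousAt.mpr (fun x => Real.continuousAt_rpow_const x a (Or.inr ha.le))

lemma contJ {a : ℝ} (ha : 0 < a) (m : ℕ) :
    Continuous (fun u : ℝ => u ^ a * (1 - u ^ 2) ^ m) :=
  (cont_rpow ha).mul ((continuous_const.sub (continuous_pow 2)).pow m)

lemma J_rec (a : ℝ) (ha : 1 ≤ a) (l : ℕ) :
    (a+1) * ∫ u in (0:ℝ)..1, u^a*(1-u^2)^(l+1)
      = (2*((l:ℝ)+1)) * ∫ u in (0:ℝ)..1, u^(a+2)*(1-u^2)^l := by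
  have ha0 : (0:ℝ) < a := by linarith
  have hderiv : ∀ u : ℝ, HasDerivAt (fun u : ℝ => u^(a+1)*(1-u^2)^(l+1))
      ((a+1)*(u^a*(1-u^2)^(l+1)) - 2*((l:ℝ)+1)*(u^(a+1)*u*(1-u^2)^l)) u := by
    intro u
    have h1 : HasDerivAt (fun u : ℝ => u^(a+1)) ((a+1)*u^a) u := by
      have := Real.hasDerivAt_rpow_const (x := u) (p := a+1) (Or.inr (by linarith))
      simpa [add_sub_cancel_right] using this
    have hu : HasDerivAt (fun u : ℝ => 1-u^2) (-(2*u)) u := by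
      simpa using ((hasDerivAt_pow 2 u).const_sub 1)
    have h2 : HasDerivAt (fun u : ℝ => (1-u^2)^(l+1))
        ((((l:ℕ)+1 : ℕ):ℝ)*(1-u^2)^((l+1)-1)*(-(2*u))) u := hu.pow (l+1)
    have := h1.mul h2
    refine this.congr_deriv ?_
    rw [Nat.add_sub_cancel]
    push_cast
    ring
  have hint : IntervalIntegrable (fun u : ℝ =>
      (a+1)*(u^a*(1-u^2)^(l+1)) - 2*((l:ℝ)+1)*(u^(a+1)*u*(1-u^2)^l)) MeasureTheory.volume 0 1 := by
    apply Continuous.intervalIntegrable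
    exact (continuous_const.mul (contJ ha0 (l+1))).sub
      (continuous_const.mul (((cont_rpow (by linarith : (0:ℝ) < a+1)).mul continuous_id).mul
        ((continuous_const.sub (continuous_pow 2)).pow l)))
  have key := intervalIntegral.integral_eq_sub_of_hasDerivAt
    (fun u _ => hderiv u) hint
  have hz : ((1:ℝ)^(a+1)*(1-(1:ℝ)^2)^(l+1)) - ((0:ℝ)^(a+1)*(1-(0:ℝ)^2)^(l+1)) = 0 := by
    rw [Real.zero_rpow (by linarith)]
    norm_num
  rw [hz] at key
  have i1 : IntervalIntegrable (fun u : ℝ => u^a*(1-u^2)^(l+1)) MeasureTheory.volume 0 1 :=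
    (contJ ha0 (l+1)).intervalIntegrable _ _
  have i2 : IntervalIntegrable (fun u : ℝ => u^(a+1)*u*(1-u^2)^l) MeasureTheory.volume 0 1 := by
    apply Continuous.intervalIntegrable
    exact ((cont_rpow (by linarith : (0:ℝ) < a+1)).mul continuous_id).mul
      ((continuous_const.sub (continuous_pow 2)).pow l)
  rw [intervalIntegral.integral_sub ((i1.const_mul _)) ((i2.const_mul _)),
    intervalIntegral.integral_const_mul, intervalIntegral.integral_const_mul] at key
  have e : ∫ u in (0:ℝ)..1, u^(a+1)*u*(1-u^2)^l = ∫ u in (0:ℝ)..1, u^(a+2)*(1-u^2)^l := by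
    apply intervalIntegral.integral_congr
    intro u hu
    rw [Set.uIcc_of_le (by norm_num)] at hu
    show u^(a+1)*u*(1-u^2)^l = u^(a+2)*(1-u^2)^l
    rcases eq_or_lt_of_le hu.1 with h | h
    · rw [← h]
      rw [Real.zero_rpow (by positivity : a+1 ≠ 0), Real.zero_rpow (by positivity : a+2 ≠ 0)]
      ring
    · have h2 : u^(a+2) = u^(a+1)*u := by
        rw [show a+2 = (a+1)+1 by ring, Real.rpow_add_one (ne_of_gt h)]
      rw [h2]
  rw [e] at key
  linarith [key]

lemma prodJ_pos (a : ℝ) (ha : 1 ≤ a) (l : ℕ) :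
    0 < ∏ j ∈ Finset.range (l+1), (a+1+2*(j:ℝ)) := by
  apply Finset.prod_pos
  intro j _
  have : (0:ℝ) ≤ j := Nat.cast_nonneg j
  linarith

lemma J_formula (l : ℕ) : ∀ a : ℝ, 1 ≤ a →
    ∫ u in (0:ℝ)..1, u^a*(1-u^2)^l
      = (2^l * Nat.factorial l) / ∏ j ∈ Finset.range (l+1), (a+1+2*(j:ℝ)) := by
  induction l with
  | zero =>
    intro a ha
    simp only [pow_zero, mul_one, Nat.factorial_zero, Finset.range_one, Finset.prod_singleton]
    rw [integral_rpow (Or.inl (by linarith))]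
    rw [Real.one_rpow, Real.zero_rpow (by positivity : a+1 ≠ 0)]
    norm_num
  | succ n ih =>
    intro a ha
    have hrec := J_rec a ha n
    have hih := ih (a+2) (by linarith)
    have ha1 : a + 1 ≠ 0 := by positivity
    have hP := prodJ_pos (a+2) (by linarith) n
    have hsplit : ∏ j ∈ Finset.range (n+2), (a+1+2*(j:ℝ))
        = (a+1) * ∏ j ∈ Finset.range (n+1), (a+2+1+2*(j:ℝ)) := by
      rw [Finset.prod_range_succ' (fun j => (a+1+2*(j:ℝ)))]
      rw [mul_comm]
      congr 1
      · push_cast; norm_num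
      · apply Finset.prod_congr rfl
        intro j _
        push_cast
        ring
    have : ∫ u in (0:ℝ)..1, u^a*(1-u^2)^(n+1)
        = (2*((n:ℝ)+1)) * ((2^n * Nat.factorial n) / ∏ j ∈ Finset.range (n+1), (a+2+1+2*(j:ℝ))) / (a+1) := by
      rw [← hih]
      field_simp at hrec ⊢
      linarith [hrec]
    rw [this, hsplit, Nat.factorial_succ]
    push_cast
    field_simp
    ring

lemma I_eq_sub (p : ℝ) (hp : 1 ≤ p) (l : ℕ) :
    ∫ θ in (0:ℝ)..(Real.pi/4), Real.sin θ ^ p * Real.cos θ ^ (2*l+1)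
      = ∫ u in (0:ℝ)..(Real.sqrt 2/2), u^p*(1-u^2)^l := by
  have hg : Continuous (fun u : ℝ => u^p*(1-u^2)^l) := contJ (by linarith) l
  have key := intervalIntegral.integral_comp_smul_deriv
    (f := Real.sin) (f' := Real.cos) (g := fun u : ℝ => u^p*(1-u^2)^l)
    (a := 0) (b := Real.pi/4)
    (fun x _ => Real.hasDerivAt_sin x) Real.continuousOn_cos hg
  rw [Real.sin_zero, Real.sin_pi_div_four] at key
  rw [← key]
  apply intervalIntegral.integral_congr
  intro θ _
  show Real.sin θ ^ p * Real.cos θ ^ (2*l+1) = Real.cos θ • (Real.sin θ^p*(1-Real.sin θ^2)^l)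
  rw [smul_eq_mul, pow_add, pow_mul, pow_one, Real.cos_sq']
  ring

lemma I_le_J (p : ℝ) (hp : 1 ≤ p) (l : ℕ) :
    ∫ θ in (0:ℝ)..(Real.pi/4), Real.sin θ ^ p * Real.cos θ ^ (2*l+1)
      ≤ (2^l * Nat.factorial l) / ∏ j ∈ Finset.range (l+1), (p+1+2*(j:ℝ)) := by
  rw [I_eq_sub p hp l, ← J_formula l p hp]
  have hg : Continuous (fun u : ℝ => u^p*(1-u^2)^l) := contJ (by linarith) l
  apply intervalIntegral.integral_mono_interval (le_refl (0:ℝ))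
    (by positivity) ?_ ?_ (hg.intervalIntegrable _ _)
  · rw [div_le_one (by norm_num)]
    calc Real.sqrt 2 ≤ Real.sqrt 4 := Real.sqrt_le_sqrt (by norm_num)
    _ = 2 := by
        rw [show (4:ℝ) = 2^2 by norm_num, Real.sqrt_sq (by norm_num)]
  · filter_upwards [MeasureTheory.ae_restrict_mem measurableSet_Ioc] with u hu
    show (0:ℝ) ≤ u^p*(1-u^2)^l
    have h1 : 0 ≤ u := hu.1.le
    have h2 : u ≤ 1 := hu.2
    have : (0:ℝ) ≤ 1 - u^2 := by nlinarith
    positivity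

lemma prod_cast_factorial (k : ℕ) (hk : 1 ≤ k) (l : ℕ) :
    ∏ j ∈ Finset.range (l+1), ((k:ℝ)+j) = ((k+l).factorial : ℝ) / ((k-1).factorial : ℝ) := by
  induction l with
  | zero =>
    rw [zero_add, Finset.prod_range_one, Nat.cast_zero, add_zero, Nat.add_zero,
      eq_div_iff (by positivity)]
    have h := Nat.mul_factorial_pred (n := k) (by omega)
    push_cast [← h]
    ring
  | succ n ih =>
    rw [Finset.prod_range_succ, ih, show k+(n+1) = (k+n)+1 by omega, Nat.factorial_succ]
    push_cast
    field_simp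
    ring

lemma prod_telescope (k : ℕ) (hk : 1 ≤ k) (l : ℕ) :
    ∏ j ∈ Finset.range (l+1), (((k:ℝ)+j-1)/((k:ℝ)+j)) = ((k:ℝ)-1)/((k:ℝ)+l) := by
  induction l with
  | zero => simp
  | succ n ih =>
    rw [Finset.prod_range_succ, ih]
    have h1 : ((k:ℝ)+n) ≠ 0 := by positivity
    have h2 : ((k:ℝ)+(n+1:ℕ)) ≠ 0 := by positivity
    push_cast at h2 ⊢
    field_simp
    ring

lemma prod_lb (s : ℝ) (hs0 : 0 < s) (hs1 : s < 1) (k l : ℕ) (hk : 2 ≤ k) :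
    ((k+l).factorial : ℝ)/((k-1).factorial : ℝ) * (((k:ℝ)-1)/((k:ℝ)+l))^s
      ≤ ∏ j ∈ Finset.range (l+1), ((k:ℝ) - s + j) := by
  have hk2 : (2:ℝ) ≤ (k:ℝ) := by exact_mod_cast hk
  have hratio : ∀ j : ℕ, (0:ℝ) ≤ ((k:ℝ)+j-1)/((k:ℝ)+j) := by
    intro j
    have hj : (0:ℝ) ≤ j := Nat.cast_nonneg j
    apply div_nonneg (by linarith) (by linarith)
  have hfac : ∀ j : ℕ, ((k:ℝ)+j)*((((k:ℝ)+j-1)/((k:ℝ)+j))^s) ≤ (k:ℝ)-s+j := by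
    intro j
    have hj : (0:ℝ) ≤ j := Nat.cast_nonneg j
    have hp1 : (0:ℝ) < (k:ℝ)+j := by linarith
    have hp2 : (0:ℝ) ≤ (k:ℝ)+j-1 := by linarith
    have hgm := Real.geom_mean_le_arith_mean2_weighted
      (by linarith : (0:ℝ) ≤ 1-s) hs0.le hp1.le hp2 (by ring)
    have hne : ((k:ℝ)+j)^s ≠ 0 := ne_of_gt (Real.rpow_pos_of_pos hp1 s)
    have hid : ((k:ℝ)+j)^(1-s)*(((k:ℝ)+j-1)^s) = ((k:ℝ)+j)*((((k:ℝ)+j-1)/((k:ℝ)+j))^s) := by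
      rw [Real.div_rpow hp2 hp1.le, Real.rpow_sub hp1, Real.rpow_one]
      field_simp
    calc ((k:ℝ)+j)*((((k:ℝ)+j-1)/((k:ℝ)+j))^s)
        = ((k:ℝ)+j)^(1-s)*(((k:ℝ)+j-1)^s) := hid.symm
    _ ≤ (1-s)*((k:ℝ)+j) + s*((k:ℝ)+j-1) := hgm
    _ = (k:ℝ)-s+j := by ring
  have heq : ((k+l).factorial : ℝ)/((k-1).factorial) * (((k:ℝ)-1)/((k:ℝ)+l))^s
      = ∏ j ∈ Finset.range (l+1), (((k:ℝ)+j)*((((k:ℝ)+j-1)/((k:ℝ)+j))^s)) := by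
    rw [Finset.prod_mul_distrib,
      Real.finset_prod_rpow _ _ (fun j _ => hratio j) s,
      prod_cast_factorial k (by omega) l, prod_telescope k (by omega) l]
  rw [heq]
  apply Finset.prod_le_prod
  · intro j _
    have hj : (0:ℝ) ≤ j := Nat.cast_nonneg j
    have := Real.rpow_nonneg (hratio j) s
    nlinarith
  · exact fun j _ => hfac j


lemma mu_sq_le (s : ℝ) (hs : 0 < s) (hs1 : s < 1) (k l : ℕ) (hk : 2 ≤ k) (hl : 2 ≤ l) :
    (boltzMu s k l)^2 ≤ 3 * Real.sqrt ((k:ℝ)+l) / ((k:ℝ)^2 * Real.sqrt k * Real.sqrt l)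
      * (((k:ℝ)+l)^(2*s) * (k:ℝ)^(-(2*s))) := by
  have hkr : (2:ℝ) ≤ (k:ℝ) := by exact_mod_cast hk
  have hlr : (2:ℝ) ≤ (l:ℝ) := by exact_mod_cast hl
  have hkpos : (0:ℝ) < k := by linarith
  have hlpos : (0:ℝ) < l := by linarith
  have hnpos : (0:ℝ) < (k:ℝ)+l := by linarith
  set X : ℝ := (Nat.factorial (2 * k + 2 * l + 1) : ℝ) /
      ((Nat.factorial (2 * k + 1) : ℝ) * (Nat.factorial (2 * l + 1) : ℝ)) with hXdef
  have hX : 0 ≤ X := by positivity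
  set I : ℝ := ∫ θ in (0:ℝ)..(Real.pi / 4),
      Real.sin θ ^ (2 * (k : ℝ) - 1 - 2 * s) * Real.cos θ ^ (2 * l + 1) with hIdef
  have hmusq : (boltzMu s k l)^2 = X * I^2 := by
    rw [boltzMu, mul_pow, Real.sq_sqrt hX]
  set p : ℝ := 2 * (k : ℝ) - 1 - 2 * s with hpdef
  have hp : 1 ≤ p := by simp only [hpdef]; linarith
  have hI0 : 0 ≤ I := by
    rw [hIdef]
    apply intervalIntegral.integral_nonneg (by positivity)
    intro θ hθ
    have h1 : 0 ≤ Real.sin θ := Real.sin_nonneg_of_nonneg_of_le_pi hθ.1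
      (le_trans hθ.2 (by linarith [Real.pi_pos]))
    have h2 : 0 ≤ Real.cos θ := Real.cos_nonneg_of_mem_Icc
      ⟨by linarith [Real.pi_pos, hθ.1], by linarith [Real.pi_pos, hθ.2]⟩
    positivity
  -- the product P and its lower bound Q
  set P : ℝ := ∏ j ∈ Finset.range (l+1), ((k:ℝ) - s + j) with hPdef
  set r : ℝ := ((k:ℝ)-1)/((k:ℝ)+l) with hrdef
  have hrpos : 0 < r := by
    rw [hrdef]; apply div_pos (by linarith) hnpos
  set Q : ℝ := ((k+l).factorial : ℝ)/((k-1).factorial : ℝ) * r^s with hQdef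
  have hQpos : 0 < Q := by
    rw [hQdef]
    have := Real.rpow_pos_of_pos hrpos s
    positivity
  have hQP : Q ≤ P := prod_lb s hs hs1 k l hk
  have hPpos : 0 < P := lt_of_lt_of_le hQpos hQP
  -- I ≤ l!/(2Q)
  have hIJ : I ≤ (Nat.factorial l : ℝ) / (2*Q) := by
    have h1 := I_le_J p hp l
    have hprodid : ∏ j ∈ Finset.range (l+1), (p+1+2*(j:ℝ)) = 2^(l+1) * P := by
      calc ∏ j ∈ Finset.range (l+1), (p+1+2*(j:ℝ))
          = ∏ j ∈ Finset.range (l+1), ((2:ℝ)*((k:ℝ)-s+j)) := by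
            apply Finset.prod_congr rfl
            intro j _
            rw [hpdef]; ring
      _ = (∏ _j ∈ Finset.range (l+1), (2:ℝ)) * P := Finset.prod_mul_distrib
      _ = 2^(l+1) * P := by rw [Finset.prod_const, Finset.card_range]
    rw [hprodid] at h1
    refine (hIdef ▸ h1).trans ?_
    rw [div_le_div_iff₀ (by positivity) (by positivity)]
    have e1 : (2:ℝ)^l * (Nat.factorial l) * (2*Q) = (Nat.factorial l) * (2^(l+1) * Q) := by ring
    rw [e1]
    apply mul_le_mul_of_nonneg_left _ (by positivity)
    apply mul_le_mul_of_nonneg_left hQP (by positivity)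
  have hIsq : I^2 ≤ ((Nat.factorial l : ℝ) / (2*Q))^2 := by
    apply pow_le_pow_left₀ hI0 hIJ
  -- express and bound
  have hstep : X * ((Nat.factorial l : ℝ) / (2*Q))^2
      = (X * (((Nat.factorial l : ℝ) * (Nat.factorial (k-1) : ℝ)) / ((k+l).factorial : ℝ))^2)
        * (1/4) * (r^s * r^s)⁻¹ := by
    rw [hQdef]
    have hf1 : ((k-1).factorial : ℝ) ≠ 0 := by positivity
    have hf2 : ((k+l).factorial : ℝ) ≠ 0 := by positivity
    have hrs : r^s ≠ 0 := ne_of_gt (Real.rpow_pos_of_pos hrpos s)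
    field_simp
    ring
  have hrr : (r^s * r^s)⁻¹ ≤ 4 * (((k:ℝ)+l)^(2*s) * (k:ℝ)^(-(2*s))) := by
    have e1 : r^s * r^s = r^(2*s) := by
      rw [← Real.rpow_add hrpos, show s+s = 2*s by ring]
    have hr_lb : (k:ℝ)/(2*((k:ℝ)+l)) ≤ r := by
      rw [hrdef, div_le_div_iff₀ (by positivity) hnpos]
      nlinarith
    have h2 : ((k:ℝ)/(2*((k:ℝ)+l)))^(2*s) ≤ r^(2*s) :=
      Real.rpow_le_rpow (by positivity) hr_lb (by positivity)
    have h3 : (r^(2*s))⁻¹ ≤ (((k:ℝ)/(2*((k:ℝ)+l)))^(2*s))⁻¹ :=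
      inv_anti₀ (Real.rpow_pos_of_pos (by positivity) _) h2
    have e2 : (((k:ℝ)/(2*((k:ℝ)+l)))^(2*s))⁻¹ = (2*((k:ℝ)+l)/(k:ℝ))^(2*s) := by
      rw [← Real.inv_rpow (by positivity), inv_div]
    have e3 : (2*((k:ℝ)+l)/(k:ℝ))^(2*s) = 2^(2*s) * (((k:ℝ)+l)^(2*s) * ((k:ℝ))^(-(2*s))) := by
      rw [Real.div_rpow (by positivity) hkpos.le, Real.mul_rpow (by norm_num) hnpos.le,
        Real.rpow_neg hkpos.le, div_eq_mul_inv]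
      ring
    have h5 : (2:ℝ)^(2*s) ≤ 4 := by
      calc (2:ℝ)^(2*s) ≤ 2^(2:ℝ) :=
            Real.rpow_le_rpow_of_exponent_le (by norm_num) (by linarith)
      _ = 4 := by
          rw [show (2:ℝ) = ((2:ℕ):ℝ) from by norm_num, Real.rpow_natCast]
          norm_num
    rw [e1]
    refine h3.trans ?_
    rw [e2, e3]
    exact mul_le_mul_of_nonneg_right h5 (by positivity)
  have hG : X * (((Nat.factorial l : ℝ) * (Nat.factorial (k-1) : ℝ)) / ((k+l).factorial : ℝ))^2
      ≤ 3 * Real.sqrt ((k:ℝ)+l) / ((k:ℝ)^2 * Real.sqrt k * Real.sqrt l) := by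
    rw [hXdef, G_identity k l (by omega)]
    exact G_bound k l (by omega) (by omega)
  have hGnn : 0 ≤ X * (((Nat.factorial l : ℝ) * (Nat.factorial (k-1) : ℝ)) / ((k+l).factorial : ℝ))^2 := by
    positivity
  calc (boltzMu s k l)^2 = X * I^2 := hmusq
  _ ≤ X * ((Nat.factorial l : ℝ) / (2*Q))^2 := mul_le_mul_of_nonneg_left hIsq hX
  _ = (X * (((Nat.factorial l : ℝ) * (Nat.factorial (k-1) : ℝ)) / ((k+l).factorial : ℝ))^2)
        * (1/4) * (r^s * r^s)⁻¹ := hstep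
  _ ≤ (X * (((Nat.factorial l : ℝ) * (Nat.factorial (k-1) : ℝ)) / ((k+l).factorial : ℝ))^2)
        * (1/4) * (4 * (((k:ℝ)+l)^(2*s) * (k:ℝ)^(-(2*s)))) := by
      apply mul_le_mul_of_nonneg_left hrr (by positivity)
  _ = (X * (((Nat.factorial l : ℝ) * (Nat.factorial (k-1) : ℝ)) / ((k+l).factorial : ℝ))^2)
        * (((k:ℝ)+l)^(2*s) * (k:ℝ)^(-(2*s))) := by ring
  _ ≤ 3 * Real.sqrt ((k:ℝ)+l) / ((k:ℝ)^2 * Real.sqrt k * Real.sqrt l)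
        * (((k:ℝ)+l)^(2*s) * (k:ℝ)^(-(2*s))) := by
      apply mul_le_mul_of_nonneg_right hG (by positivity)

lemma term_bound (s α : ℝ) (hs : 0 < s) (hs1 : s < 1) (hα : 0 < α)
    (k l : ℕ) (hk : 2 ≤ k) (hl : 2 ≤ l) :
    (boltzMu s k l)^2 * (l:ℝ)^((3:ℝ)/2+α) * (k:ℝ)^((3:ℝ)/2+α)
      ≤ 3 * ((k:ℝ)+l)^(2*s+1/2) * (k:ℝ)^(α-1-2*s) * (l:ℝ)^(1+α) := by
  have hkr : (2:ℝ) ≤ (k:ℝ) := by exact_mod_cast hk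
  have hlr : (2:ℝ) ≤ (l:ℝ) := by exact_mod_cast hl
  have hkpos : (0:ℝ) < k := by linarith
  have hlpos : (0:ℝ) < l := by linarith
  have hnpos : (0:ℝ) < (k:ℝ)+l := by linarith
  have hmu := mu_sq_le s hs hs1 k l hk hl
  have step : (boltzMu s k l)^2 * (l:ℝ)^((3:ℝ)/2+α) * (k:ℝ)^((3:ℝ)/2+α)
      ≤ (3 * Real.sqrt ((k:ℝ)+l) / ((k:ℝ)^2 * Real.sqrt k * Real.sqrt l)
          * (((k:ℝ)+l)^(2*s) * (k:ℝ)^(-(2*s)))) * (l:ℝ)^((3:ℝ)/2+α) * (k:ℝ)^((3:ℝ)/2+α) := by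
    apply mul_le_mul_of_nonneg_right _ (by positivity)
    apply mul_le_mul_of_nonneg_right hmu (by positivity)
  refine step.trans (le_of_eq ?_)
  have en : ((k:ℝ)+l)^(2*s+1/2) = ((k:ℝ)+l)^(2*s) * ((k:ℝ)+l)^((1:ℝ)/2) := by
    rw [← Real.rpow_add hnpos]
  have ek : (k:ℝ)^(α-1-2*s)
      = (k:ℝ)^((3:ℝ)/2+α) * (k:ℝ)^(-(2*s)) * ((k:ℝ)^((2:ℝ)))⁻¹ * ((k:ℝ)^((1:ℝ)/2))⁻¹ := by
    rw [← Real.rpow_neg hkpos.le ((2:ℝ)), ← Real.rpow_neg hkpos.le ((1:ℝ)/2),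
      ← Real.rpow_add hkpos, ← Real.rpow_add hkpos, ← Real.rpow_add hkpos]
    congr 1
    ring
  have el : (l:ℝ)^(1+α) = (l:ℝ)^((3:ℝ)/2+α) * ((l:ℝ)^((1:ℝ)/2))⁻¹ := by
    rw [← Real.rpow_neg hlpos.le, ← Real.rpow_add hlpos]
    congr 1
    ring
  rw [en, ek, el, Real.sqrt_eq_rpow, Real.sqrt_eq_rpow, Real.sqrt_eq_rpow,
    show ((k:ℝ)^(2:ℕ)) = (k:ℝ)^((2:ℝ)) from by
      rw [← Real.rpow_natCast (k:ℝ) 2]; norm_num]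
  have h1 : (k:ℝ)^((2:ℝ)) ≠ 0 := ne_of_gt (Real.rpow_pos_of_pos hkpos _)
  have h2 : (k:ℝ)^((1:ℝ)/2) ≠ 0 := ne_of_gt (Real.rpow_pos_of_pos hkpos _)
  have h3 : (l:ℝ)^((1:ℝ)/2) ≠ 0 := ne_of_gt (Real.rpow_pos_of_pos hlpos _)
  field_simp

theorem sum_mu_sq_weighted_le_two (s α : ℝ) (hs : 0 < s) (hs1 : s < 1)
    (hα : 0 < α) (hαs : α < 2 * s) :
    ∃ C > 0, ∀ n : ℕ, 4 ≤ n →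
      ∑ k ∈ Finset.Icc 2 (n - 2),
          (boltzMu s k (n - k)) ^ 2 * ((n - k : ℕ) : ℝ) ^ ((3:ℝ)/2 + α) *
            (k : ℝ) ^ ((3:ℝ)/2 + α)
        ≤ C * (n : ℝ) ^ (2 * s + 3/2 + α) := by
  set ε : ℝ := 2*s - α with hεdef
  have hε : 0 < ε := by simp only [hεdef]; linarith
  have hsum : Summable (fun k : ℕ => ((k:ℝ)^(1+ε))⁻¹) :=
    Real.summable_nat_rpow_inv.mpr (by linarith)
  set Z : ℝ := ∑' k : ℕ, ((k:ℝ)^(1+ε))⁻¹ with hZdef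
  have hZ0 : 0 ≤ Z := tsum_nonneg (fun k => by positivity)
  refine ⟨3*Z+1, by linarith, ?_⟩
  intro n hn
  have hnpos : (0:ℝ) < n := by
    have : (4:ℝ) ≤ (n:ℝ) := by exact_mod_cast hn
    linarith
  have key : ∀ k ∈ Finset.Icc 2 (n-2),
      (boltzMu s k (n - k)) ^ 2 * ((n - k : ℕ) : ℝ) ^ ((3:ℝ)/2 + α) * (k : ℝ) ^ ((3:ℝ)/2 + α)
        ≤ 3 * ((n:ℝ)^(2*s+1/2) * (n:ℝ)^(1+α)) * ((k:ℝ)^(1+ε))⁻¹ := by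
    intro k hkmem
    rw [Finset.mem_Icc] at hkmem
    obtain ⟨hk2, hkn⟩ := hkmem
    have hl2 : 2 ≤ n - k := by omega
    have hcast : ((k:ℝ) + ((n-k:ℕ):ℝ)) = (n:ℝ) := by
      have : k + (n - k) = n := by omega
      exact_mod_cast congrArg (Nat.cast (R := ℝ)) this
    have hb := term_bound s α hs hs1 hα k (n-k) hk2 hl2
    rw [hcast] at hb
    refine hb.trans ?_
    have hkpos : (0:ℝ) < k := by
      have : (2:ℝ) ≤ (k:ℝ) := by exact_mod_cast hk2
      linarith
    have e1 : (k:ℝ)^(α-1-2*s) = ((k:ℝ)^(1+ε))⁻¹ := by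
      rw [show α-1-2*s = -(1+ε) by rw [hεdef]; ring, Real.rpow_neg hkpos.le]
    have e2 : ((n-k:ℕ):ℝ)^(1+α) ≤ (n:ℝ)^(1+α) := by
      apply Real.rpow_le_rpow (Nat.cast_nonneg _) _ (by linarith)
      exact_mod_cast Nat.sub_le n k
    calc 3 * (n:ℝ)^(2*s+1/2) * (k:ℝ)^(α-1-2*s) * ((n-k:ℕ):ℝ)^(1+α)
        ≤ 3 * (n:ℝ)^(2*s+1/2) * (k:ℝ)^(α-1-2*s) * (n:ℝ)^(1+α) := by
          apply mul_le_mul_of_nonneg_left e2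
          have := Real.rpow_nonneg hkpos.le (α-1-2*s)
          positivity
    _ = 3 * ((n:ℝ)^(2*s+1/2) * (n:ℝ)^(1+α)) * ((k:ℝ)^(1+ε))⁻¹ := by
          rw [e1]; ring
  calc ∑ k ∈ Finset.Icc 2 (n - 2),
        (boltzMu s k (n - k)) ^ 2 * ((n - k : ℕ) : ℝ) ^ ((3:ℝ)/2 + α) * (k : ℝ) ^ ((3:ℝ)/2 + α)
      ≤ ∑ k ∈ Finset.Icc 2 (n-2), 3 * ((n:ℝ)^(2*s+1/2) * (n:ℝ)^(1+α)) * ((k:ℝ)^(1+ε))⁻¹ :=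
        Finset.sum_le_sum key
  _ = 3 * ((n:ℝ)^(2*s+1/2) * (n:ℝ)^(1+α)) * ∑ k ∈ Finset.Icc 2 (n-2), ((k:ℝ)^(1+ε))⁻¹ := by
        rw [Finset.mul_sum]
  _ ≤ 3 * ((n:ℝ)^(2*s+1/2) * (n:ℝ)^(1+α)) * Z := by
        apply mul_le_mul_of_nonneg_left _ (by positivity)
        exact Summable.sum_le_tsum _ (fun k _ => by positivity) hsum
  _ = 3 * Z * (n:ℝ)^(2*s+3/2+α) := by
        rw [← Real.rpow_add hnpos]
        ring_nf
  _ ≤ (3*Z+1) * (n:ℝ)^(2*s+3/2+α) := by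
        have := Real.rpow_pos_of_pos hnpos (2*s+3/2+α)
        nlinarith
end

section
/- Let 0 < s < 1. There exists a constant C > 0 such that for all integers k, l ≥ 2 one has μ_{k,l} ≤ C · (k+l)^{1/4+s} / (l^{1/4} · k^{5/4+s}). -/
open Real MeasureTheory Finset
open intervalIntegral Nat

lemma centralBinom_sq_mul_le (n : ℕ) : n.centralBinom ^ 2 * (2 * n + 1) ≤ 16 ^ n := by
  induction n with
  | zero => simp [Nat.centralBinom]
  | succ n ih =>
    have h := Nat.succ_mul_centralBinom_succ n
    have key : (n+1)^2 * ((n+1).centralBinom ^ 2 * (2*(n+1)+1)) ≤ (n+1)^2 * 16 ^ (n+1) := by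
      have h2 : (n+1)^2 * (n+1).centralBinom^2 = 4 * (2*n+1)^2 * n.centralBinom^2 := by
        have := congrArg (· ^ 2) h
        simpa [mul_pow] using this.trans (by ring)
      calc (n+1)^2 * ((n+1).centralBinom ^ 2 * (2*(n+1)+1))
          = (4 * (2*n+1)^2 * n.centralBinom^2) * (2*n+3) := by rw [← mul_assoc, h2]; ring
        _ = 4 * ((2*n+1)*(2*n+3)) * (n.centralBinom^2 * (2*n+1)) := by ring
        _ ≤ 4 * (4*(n+1)^2) * 16^n := by
            apply Nat.mul_le_mul (Nat.mul_le_mul_left _ (by nlinarith)) ih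
        _ = (n+1)^2 * 16 ^ (n+1) := by ring
    exact Nat.le_of_mul_le_mul_left key (by positivity)

lemma le_centralBinom_sq_mul (n : ℕ) (hn : 1 ≤ n) : 16 ^ n ≤ 4 * n.centralBinom ^ 2 * n := by
  induction n with
  | zero => omega
  | succ n ih =>
    rcases Nat.lt_or_ge n 1 with h1 | hn'
    · interval_cases n
      · decide
    · have ih' := ih hn'
      have h := Nat.succ_mul_centralBinom_succ n
      have key : (n+1)^2 * (16 ^ (n+1)) ≤ (n+1)^2 * (4 * (n+1).centralBinom ^ 2 * (n+1)) := by
        have h2 : (n+1)^2 * (n+1).centralBinom^2 = 4 * (2*n+1)^2 * n.centralBinom^2 := by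
          have := congrArg (· ^ 2) h
          simpa [mul_pow] using this.trans (by ring)
        calc (n+1)^2 * 16^(n+1) = 16 * (n+1)^2 * 16^n := by ring
          _ ≤ 16 * (n+1)^2 * (4 * n.centralBinom^2 * n) := Nat.mul_le_mul_left _ ih'
          _ = (4 * n.centralBinom^2) * (16 * (n+1)^2 * n) := by ring
          _ ≤ (4 * n.centralBinom^2) * ((2*n+1)^2 * (4*(n+1))) := by
              apply Nat.mul_le_mul_left
              nlinarith
          _ = (4 * (2*n+1)^2 * n.centralBinom^2) * (4*(n+1)) := by ring
          _ = (n+1)^2 * (4 * (n+1).centralBinom ^ 2 * (n+1)) := by rw [← h2]; ring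
      exact Nat.le_of_mul_le_mul_left key (by positivity)


lemma betaNat (a b : ℕ) : ∫ x in (0:ℝ)..1, x ^ a * (1 - x) ^ b
    = (a.factorial : ℝ) * b.factorial / (a + b + 1).factorial := by
  induction b generalizing a with
  | zero =>
    simp only [pow_zero, mul_one, integral_pow, one_pow, Nat.add_zero, Nat.factorial_succ,
      Nat.factorial_zero]
    rw [zero_pow (Nat.succ_ne_zero a)]
    have ha : (a.factorial : ℝ) ≠ 0 := Nat.cast_ne_zero.2 a.factorial_ne_zero
    field_simp
    push_cast; ring
  | succ b ih =>
    have ha : ((a:ℝ) + 1) ≠ 0 := by positivity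
    have hu : ∀ x ∈ Set.uIcc (0:ℝ) 1, HasDerivAt (fun x : ℝ => (1 - x) ^ (b+1))
        (-((b+1) * (1 - x) ^ b)) x := by
      intro x _
      have h1 : HasDerivAt (fun x : ℝ => 1 - x) (-1) x := by
        simpa using (hasDerivAt_id x).const_sub 1
      have := h1.fun_pow (b+1)
      simpa [mul_comm, mul_assoc, mul_left_comm] using this
    have hv : ∀ x ∈ Set.uIcc (0:ℝ) 1, HasDerivAt (fun x : ℝ => x ^ (a+1) / (a+1))
        (x ^ a) x := by
      intro x _
      have := (hasDerivAt_pow (a+1) x).div_const ((a:ℝ)+1)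
      have h2 : ((a:ℝ)+1) * x ^ a / ((a:ℝ)+1) = x ^ a := by field_simp
      simpa [Nat.cast_add, Nat.cast_one, h2] using this
    have hint : ∫ x in (0:ℝ)..1, (1-x)^(b+1) * x ^ a
        = (1-(1:ℝ))^(b+1) * (1^(a+1)/(a+1)) - (1-(0:ℝ))^(b+1) * (0^(a+1)/(a+1))
          - ∫ x in (0:ℝ)..1, (-((b+1) * (1 - x) ^ b)) * (x ^ (a+1) / (a+1)) := by
      exact integral_mul_deriv_eq_deriv_mul hu hv
        (Continuous.intervalIntegrable (by continuity) _ _)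
        (Continuous.intervalIntegrable (by continuity) _ _)
    have e1 : ∫ x in (0:ℝ)..1, x ^ a * (1-x)^(b+1) = ∫ x in (0:ℝ)..1, (1-x)^(b+1) * x ^ a := by
      congr 1; ext x; ring
    have e2 : ∫ x in (0:ℝ)..1, (-((b+1) * (1 - x) ^ b)) * (x ^ (a+1) / (a+1))
        = (-((b:ℝ)+1) / ((a:ℝ)+1)) * ∫ x in (0:ℝ)..1, x ^ (a+1) * (1-x)^b := by
      rw [← intervalIntegral.integral_const_mul]
      congr 1; ext x; ring
    rw [e1, hint, e2, ih (a+1)]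
    have h3 : ((a+1) + b + 1) = (a + (b+1) + 1) := by ring
    rw [h3]
    rw [Nat.factorial_succ (a), Nat.factorial_succ b]
    push_cast
    field_simp
    ring


lemma trig_subst (c : ℝ) (hc : 0 < c) (l : ℕ) :
    ∫ θ in (0:ℝ)..(Real.pi/4), Real.sin θ ^ (2*c+1) * Real.cos θ ^ (2*l+1)
    = ∫ u in (0:ℝ)..(1/2:ℝ), (1/2 : ℝ) * (u ^ c * (1-u)^l) := by
  have hf : Continuous (fun u : ℝ => (1/2 : ℝ) * (u ^ c * (1-u)^l)) := by
    apply Continuous.mul continuous_const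
    apply Continuous.mul _ (by continuity)
    exact continuous_iff_continuousAt.2 fun u => Real.continuousAt_rpow_const u c (Or.inr hc.le)
  have hg : ∀ θ ∈ Set.uIcc (0:ℝ) (Real.pi/4),
      HasDerivAt (fun θ : ℝ => Real.sin θ ^ 2) (2 * Real.sin θ * Real.cos θ) θ := by
    intro θ _
    have := (Real.hasDerivAt_sin θ).fun_pow 2
    simpa [mul_comm, mul_assoc] using this
  have hg' : ContinuousOn (fun θ : ℝ => 2 * Real.sin θ * Real.cos θ)
      (Set.uIcc (0:ℝ) (Real.pi/4)) := by fun_prop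
  have key := intervalIntegral.integral_comp_smul_deriv hg hg' hf
  have hends : Real.sin (Real.pi/4) ^ 2 = 1/2 := by
    rw [Real.sin_pi_div_four, div_pow, Real.sq_sqrt (by norm_num : (0:ℝ) ≤ 2)]
    norm_num
  rw [show Real.sin 0 ^ 2 = 0 by simp, hends] at key
  rw [← key]
  apply intervalIntegral.integral_congr
  intro θ hθ
  rw [Set.uIcc_of_le (by positivity : (0:ℝ) ≤ Real.pi/4)] at hθ
  have hθ0 : 0 ≤ θ := hθ.1
  have hθπ : θ ≤ Real.pi := le_trans hθ.2 (by linarith [Real.pi_pos])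
  have hsin : 0 ≤ Real.sin θ := Real.sin_nonneg_of_nonneg_of_le_pi hθ0 hθπ
  simp only [Function.comp, smul_eq_mul]
  have h1 : ((Real.sin θ ^ 2 : ℝ)) ^ c = Real.sin θ ^ (2*c) := by
    rw [← Real.rpow_natCast (Real.sin θ) 2, ← Real.rpow_mul hsin]
    norm_num
  have h2 : (1 - Real.sin θ ^ 2) = Real.cos θ ^ 2 := (Real.cos_sq' θ).symm
  have h3 : Real.sin θ ^ (2*c) * Real.sin θ = Real.sin θ ^ (2*c+1) := by
    rw [Real.rpow_add' hsin (by linarith), Real.rpow_one]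
  rw [h1, h2, ← h3]
  ring


lemma pointwise_amgm (s : ℝ) (hs : 0 < s) (hs1 : s < 1) (k l m : ℕ) (hk : 2 ≤ k)
    (hl : 1 ≤ l) (hm : 0 < m) (u : ℝ) (hu : 0 ≤ u) (hu1 : u ≤ 1) :
    u ^ ((k:ℝ)-1-s) * (1-u)^l ≤
      s * (((k:ℝ)/m) ^ (1-s) * (u^(k-2) * (1-u)^l))
      + (1-s) * (((m:ℝ)/k) ^ s * (u^(k-1) * (1-u)^l)) := by
  have hu1' : (0:ℝ) ≤ 1 - u := by linarith
  have hkm : (0:ℝ) < (k:ℝ)/m := by positivity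
  have hmk : (0:ℝ) < (m:ℝ)/k := by positivity
  set t : ℝ := ((k:ℝ)/m) ^ (1-s) with ht
  set r : ℝ := ((m:ℝ)/k) ^ s with hr
  have htpos : 0 < t := rpow_pos_of_pos hkm _
  have hrpos : 0 < r := rpow_pos_of_pos hmk _
  have hp1 : (0:ℝ) ≤ t * (u^(k-2) * (1-u)^l) := by positivity
  have hp2 : (0:ℝ) ≤ r * (u^(k-1) * (1-u)^l) := by positivity
  have key := Real.geom_mean_le_arith_mean2_weighted hs.le (by linarith : (0:ℝ) ≤ 1-s)
    hp1 hp2 (by ring)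
  refine le_trans (le_of_eq ?_) key
  -- show LHS = p₁ ^ s * p₂ ^ (1-s)
  have e1 : (t * (u^(k-2) * (1-u)^l)) ^ s
      = t ^ s * (u ^ (((k:ℝ)-2)*s) * (1-u) ^ ((l:ℝ)*s)) := by
    rw [Real.mul_rpow htpos.le (by positivity), Real.mul_rpow (by positivity) (by positivity),
      ← Real.rpow_natCast u (k-2), ← Real.rpow_natCast (1-u) l,
      ← Real.rpow_mul hu, ← Real.rpow_mul hu1']
    have : ((k-2 : ℕ):ℝ) = (k:ℝ) - 2 := by
      have : (2:ℕ) ≤ k := hk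
      push_cast [Nat.cast_sub this]; ring
    rw [this]
  have e2 : (r * (u^(k-1) * (1-u)^l)) ^ (1-s)
      = r ^ (1-s) * (u ^ (((k:ℝ)-1)*(1-s)) * (1-u) ^ ((l:ℝ)*(1-s))) := by
    rw [Real.mul_rpow hrpos.le (by positivity), Real.mul_rpow (by positivity) (by positivity),
      ← Real.rpow_natCast u (k-1), ← Real.rpow_natCast (1-u) l,
      ← Real.rpow_mul hu, ← Real.rpow_mul hu1']
    have : ((k-1 : ℕ):ℝ) = (k:ℝ) - 1 := by
      have : (1:ℕ) ≤ k := by omega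
      push_cast [Nat.cast_sub this]; ring
    rw [this]
  rw [e1, e2]
  have etr : t ^ s * r ^ (1-s) = 1 := by
    rw [ht, hr, ← Real.rpow_mul hkm.le, ← Real.rpow_mul hmk.le]
    rw [show (1-s)*s = s*(1-s) by ring]
    rw [← Real.mul_rpow hkm.le hmk.le]
    have : (k:ℝ)/m * ((m:ℝ)/k) = 1 := by
      field_simp
    rw [this, Real.one_rpow]
  have eu : u ^ (((k:ℝ)-2)*s) * u ^ (((k:ℝ)-1)*(1-s)) = u ^ ((k:ℝ)-1-s) := by
    have hk2 : (2:ℝ) ≤ (k:ℝ) := by exact_mod_cast hk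
    rw [← Real.rpow_add' hu (by nlinarith : ((k:ℝ)-2)*s + ((k:ℝ)-1)*(1-s) ≠ 0)]
    ring_nf
  have ev : (1-u) ^ ((l:ℝ)*s) * (1-u) ^ ((l:ℝ)*(1-s)) = (1-u) ^ l := by
    rw [← Real.rpow_add' hu1' (by
      have : (l:ℝ) ≥ 1 := by exact_mod_cast hl
      nlinarith : (l:ℝ)*s + (l:ℝ)*(1-s) ≠ 0)]
    rw [show (l:ℝ)*s + (l:ℝ)*(1-s) = (l:ℝ) by ring, Real.rpow_natCast]
  calc u ^ ((k:ℝ)-1-s) * (1-u)^l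
      = (t ^ s * r ^ (1-s)) * ((u ^ (((k:ℝ)-2)*s) * u ^ (((k:ℝ)-1)*(1-s)))
        * ((1-u) ^ ((l:ℝ)*s) * (1-u) ^ ((l:ℝ)*(1-s)))) := by rw [etr, eu, ev]; ring
    _ = t ^ s * (u ^ (((k:ℝ)-2)*s) * (1-u) ^ ((l:ℝ)*s))
        * (r ^ (1-s) * (u ^ (((k:ℝ)-1)*(1-s)) * (1-u) ^ ((l:ℝ)*(1-s)))) := by ring



lemma binom_real_ub (n : ℕ) : (n.centralBinom : ℝ) * Real.sqrt (2*n+1) ≤ 4 ^ n := by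
  have h := centralBinom_sq_mul_le n
  have hR : ((n.centralBinom : ℝ))^2 * (2*n+1) ≤ (4:ℝ)^n * 4^n := by
    have := (Nat.cast_le (α := ℝ)).2 h
    push_cast at this
    calc ((n.centralBinom : ℝ))^2 * (2*n+1) ≤ (16:ℝ)^n := this
      _ = (4:ℝ)^n * 4^n := by rw [← mul_pow]; norm_num
  calc (n.centralBinom : ℝ) * Real.sqrt (2*n+1)
      = Real.sqrt (((n.centralBinom : ℝ))^2 * (2*n+1)) := by
        rw [Real.sqrt_mul (by positivity), Real.sqrt_sq (by positivity)]
    _ ≤ Real.sqrt ((4:ℝ)^n * 4^n) := Real.sqrt_le_sqrt hR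
    _ = (4:ℝ)^n := by rw [show (4:ℝ)^n * 4^n = ((4:ℝ)^n)^2 by ring, Real.sqrt_sq (by positivity)]

lemma binom_real_lb (n : ℕ) (hn : 1 ≤ n) : (4:ℝ) ^ n ≤ 2 * n.centralBinom * Real.sqrt n := by
  have h := le_centralBinom_sq_mul n hn
  have hR : (4:ℝ)^n * 4^n ≤ (2 * (n.centralBinom:ℝ))^2 * n := by
    have := (Nat.cast_le (α := ℝ)).2 h
    push_cast at this
    calc (4:ℝ)^n * 4^n = (16:ℝ)^n := by rw [← mul_pow]; norm_num
      _ ≤ 4 * (n.centralBinom:ℝ)^2 * n := this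
      _ = (2 * (n.centralBinom:ℝ))^2 * n := by ring
  calc (4:ℝ)^n = Real.sqrt ((4:ℝ)^n * 4^n) := by
        rw [show (4:ℝ)^n * 4^n = ((4:ℝ)^n)^2 by ring, Real.sqrt_sq (by positivity)]
    _ ≤ Real.sqrt ((2 * (n.centralBinom:ℝ))^2 * n) := Real.sqrt_le_sqrt hR
    _ = 2 * n.centralBinom * Real.sqrt n := by
        rw [Real.sqrt_mul (by positivity), Real.sqrt_sq (by positivity)]

lemma fact_ident (k l : ℕ) (hk : 2 ≤ k) (hl : 2 ≤ l) :
    (((2*k+2*l+1).factorial : ℝ) / ((2*k+1).factorial * (2*l+1).factorial))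
      * ((((k-1).factorial : ℝ) * (l.factorial : ℝ) / ((k+l).factorial : ℝ)))^2
    = ((2*(k+l)+1) * ((k+l).centralBinom : ℝ))
      / ((2*k+1) * (2*l+1) * (k:ℝ)^2 * (k.centralBinom : ℝ) * (l.centralBinom : ℝ)) := by
  have hBn : ∀ n : ℕ, ((2*n).factorial : ℝ) = (n.centralBinom : ℝ) * n.factorial * n.factorial := by
    intro n
    have h := Nat.choose_mul_factorial_mul_factorial (Nat.le_mul_of_pos_left n (by norm_num) : n ≤ 2*n)
    have h2 : 2*n - n = n := by omega
    rw [h2] at h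
    rw [Nat.centralBinom, ← h]
    push_cast
    ring
  have hfs : ∀ n : ℕ, ((2*n+1).factorial : ℝ) = (2*n+1) * ((2*n).factorial : ℝ) := by
    intro n; rw [Nat.factorial_succ]; push_cast; ring
  have hkf : (k.factorial : ℝ) = k * ((k-1).factorial : ℝ) := by
    obtain ⟨j, rfl⟩ : ∃ j, k = j + 1 := ⟨k-1, by omega⟩
    rw [Nat.factorial_succ]
    push_cast [Nat.add_sub_cancel]
    ring
  have e1 : 2*k+2*l+1 = 2*(k+l)+1 := by ring
  rw [e1, hfs (k+l), hfs k, hfs l, hBn (k+l), hBn k, hBn l]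
  have hk0 : ((k.factorial : ℝ)) ≠ 0 := by positivity
  have hl0 : ((l.factorial : ℝ)) ≠ 0 := by positivity
  have hm0 : (((k+l).factorial : ℝ)) ≠ 0 := by positivity
  have hk1 : (((k-1).factorial : ℝ)) ≠ 0 := by positivity
  have hBk : ((k.centralBinom : ℝ)) ≠ 0 := by exact_mod_cast k.centralBinom_ne_zero
  have hBl : ((l.centralBinom : ℝ)) ≠ 0 := by exact_mod_cast l.centralBinom_ne_zero
  have hBm : (((k+l).centralBinom : ℝ)) ≠ 0 := by exact_mod_cast (k+l).centralBinom_ne_zero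
  have hkr : (k:ℝ) ≠ 0 := by positivity
  field_simp
  rw [hkf]
  push_cast
  ring



lemma Q_bound (k l : ℕ) (hk : 2 ≤ k) (hl : 2 ≤ l) :
    ((2*(k+l)+1) * ((k+l).centralBinom : ℝ))
      / ((2*k+1) * (2*l+1) * (k:ℝ)^2 * (k.centralBinom : ℝ) * (l.centralBinom : ℝ))
    ≤ 3 * Real.sqrt ((k:ℝ)+l) / (Real.sqrt k * Real.sqrt l * (k:ℝ)^2) := by
  set m := k + l with hm
  have hk0 : (0:ℝ) < k := by exact_mod_cast Nat.lt_of_lt_of_le two_pos hk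
  have hl0 : (0:ℝ) < l := by exact_mod_cast Nat.lt_of_lt_of_le two_pos hl
  have hBk : (0:ℝ) < (k.centralBinom : ℝ) := by exact_mod_cast k.centralBinom_pos
  have hBl : (0:ℝ) < (l.centralBinom : ℝ) := by exact_mod_cast l.centralBinom_pos
  have hBm : (0:ℝ) < (m.centralBinom : ℝ) := by exact_mod_cast m.centralBinom_pos
  have hmR : ((m:ℕ):ℝ) = (k:ℝ) + l := by push_cast [hm]; ring
  have hsk : (0:ℝ) < Real.sqrt k := Real.sqrt_pos.2 hk0
  have hsl : (0:ℝ) < Real.sqrt l := Real.sqrt_pos.2 hl0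
  have hsm : (0:ℝ) < Real.sqrt ((k:ℝ)+l) := Real.sqrt_pos.2 (by linarith)
  rw [div_le_div_iff₀ (by positivity) (by positivity)]
  have key : ((2*(m:ℕ)+1) : ℝ) * (m.centralBinom : ℝ) * (Real.sqrt k * Real.sqrt l)
      ≤ 3 * Real.sqrt ((k:ℝ)+l) *
        (((2*k+1):ℝ) * ((2*l+1):ℝ) * (k.centralBinom : ℝ) * (l.centralBinom : ℝ)) := by
    have h1 : ((2*(m:ℕ)+1) : ℝ) * (m.centralBinom : ℝ)
        = Real.sqrt (2*(m:ℕ)+1) * ((m.centralBinom : ℝ) * Real.sqrt (2*(m:ℕ)+1)) := by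
      rw [show Real.sqrt (2*(m:ℕ)+1) * ((m.centralBinom : ℝ) * Real.sqrt (2*(m:ℕ)+1))
          = (Real.sqrt (2*(m:ℕ)+1) * Real.sqrt (2*(m:ℕ)+1)) * (m.centralBinom : ℝ) by ring,
        Real.mul_self_sqrt (by positivity)]
    have h2 : (m.centralBinom : ℝ) * Real.sqrt (2*(m:ℕ)+1) ≤ 4 ^ m := by
      have := binom_real_ub m; push_cast at this ⊢; exact this
    have h3 : (4:ℝ)^m = 4^k * 4^l := by rw [hm, pow_add]
    have h4 : (4:ℝ)^k * Real.sqrt k ≤ (2*k+1) * (k.centralBinom : ℝ) := by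
      calc (4:ℝ)^k * Real.sqrt k ≤ (2 * k.centralBinom * Real.sqrt k) * Real.sqrt k := by
            apply mul_le_mul_of_nonneg_right (binom_real_lb k (by omega)) hsk.le
        _ = (2*(k:ℝ)) * (k.centralBinom : ℝ) := by
            rw [mul_assoc, mul_assoc, Real.mul_self_sqrt hk0.le]; ring
        _ ≤ (2*(k:ℝ)+1) * (k.centralBinom : ℝ) := by nlinarith
    have h5 : (4:ℝ)^l * Real.sqrt l ≤ (2*l+1) * (l.centralBinom : ℝ) := by
      calc (4:ℝ)^l * Real.sqrt l ≤ (2 * l.centralBinom * Real.sqrt l) * Real.sqrt l := by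
            apply mul_le_mul_of_nonneg_right (binom_real_lb l (by omega)) hsl.le
        _ = (2*(l:ℝ)) * (l.centralBinom : ℝ) := by
            rw [mul_assoc, mul_assoc, Real.mul_self_sqrt hl0.le]; ring
        _ ≤ (2*(l:ℝ)+1) * (l.centralBinom : ℝ) := by nlinarith
    have h6 : Real.sqrt (2*(m:ℕ)+1) ≤ 3 * Real.sqrt ((k:ℝ)+l) := by
      calc Real.sqrt (2*(m:ℕ)+1) ≤ Real.sqrt (9*((k:ℝ)+l)) := by
            apply Real.sqrt_le_sqrt
            have hk2 : (2:ℝ) ≤ (k:ℝ) := by exact_mod_cast hk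
            have hl2 : (2:ℝ) ≤ (l:ℝ) := by exact_mod_cast hl
            push_cast [hm]
            nlinarith
        _ = 3 * Real.sqrt ((k:ℝ)+l) := by
            rw [show (9:ℝ)*((k:ℝ)+l) = 3^2 * ((k:ℝ)+l) by norm_num, Real.sqrt_mul (by positivity),
              Real.sqrt_sq (by norm_num)]
    calc ((2*(m:ℕ)+1) : ℝ) * (m.centralBinom : ℝ) * (Real.sqrt k * Real.sqrt l)
        = Real.sqrt (2*(m:ℕ)+1) * (((m.centralBinom : ℝ) * Real.sqrt (2*(m:ℕ)+1))
            * (Real.sqrt k * Real.sqrt l)) := by rw [h1]; ring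
      _ ≤ Real.sqrt (2*(m:ℕ)+1) * ((4:ℝ)^m * (Real.sqrt k * Real.sqrt l)) := by
          apply mul_le_mul_of_nonneg_left _ (Real.sqrt_nonneg _)
          apply mul_le_mul_of_nonneg_right h2 (by positivity)
      _ = Real.sqrt (2*(m:ℕ)+1) * (((4:ℝ)^k * Real.sqrt k) * ((4:ℝ)^l * Real.sqrt l)) := by
          rw [h3]; ring
      _ ≤ Real.sqrt (2*(m:ℕ)+1) * (((2*(k:ℝ)+1) * (k.centralBinom : ℝ))
            * ((2*(l:ℝ)+1) * (l.centralBinom : ℝ))) := by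
          apply mul_le_mul_of_nonneg_left _ (Real.sqrt_nonneg _)
          apply mul_le_mul h4 h5 (by positivity) (by positivity)
      _ ≤ (3 * Real.sqrt ((k:ℝ)+l)) * (((2*(k:ℝ)+1) * (k.centralBinom : ℝ))
            * ((2*(l:ℝ)+1) * (l.centralBinom : ℝ))) := by
          apply mul_le_mul_of_nonneg_right h6 (by positivity)
      _ = 3 * Real.sqrt ((k:ℝ)+l) *
          (((2*k+1):ℝ) * ((2*l+1):ℝ) * (k.centralBinom : ℝ) * (l.centralBinom : ℝ)) := by
          push_cast; ring
  calc (2*((k:ℝ)+l)+1) * ((m.centralBinom : ℝ)) * (Real.sqrt k * Real.sqrt l * (k:ℝ)^2)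
      = ((2*(m:ℕ)+1) * (m.centralBinom : ℝ) * (Real.sqrt k * Real.sqrt l)) * (k:ℝ)^2 := by
        simp only [hm]; push_cast; ring
    _ ≤ (3 * Real.sqrt ((k:ℝ)+l) *
          (((2*k+1):ℝ) * ((2*l+1):ℝ) * (k.centralBinom : ℝ) * (l.centralBinom : ℝ))) * (k:ℝ)^2 := by
        apply mul_le_mul_of_nonneg_right key (by positivity)
    _ = 3 * Real.sqrt ((k:ℝ)+l) *
          ((2*(k:ℝ)+1) * (2*(l:ℝ)+1) * (k:ℝ)^2 * (k.centralBinom : ℝ) * (l.centralBinom : ℝ)) := by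
        push_cast; ring




lemma int_bound (s : ℝ) (hs : 0 < s) (hs1 : s < 1) (k l : ℕ) (hk : 2 ≤ k) (hl : 2 ≤ l) :
    ∫ u in (0:ℝ)..1, u ^ ((k:ℝ)-1-s) * (1-u)^l
    ≤ 2 * ((((k+l:ℕ)):ℝ)/k) ^ s * (((k-1).factorial : ℝ) * l.factorial / ((k+l).factorial)) := by
  have hk0 : (0:ℝ) < k := by exact_mod_cast Nat.lt_of_lt_of_le two_pos hk
  have hk2 : (2:ℝ) ≤ (k:ℝ) := by exact_mod_cast hk
  have hm0 : (0:ℝ) < ((k+l:ℕ):ℝ) := by positivity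
  set m := k + l with hm
  set t : ℝ := ((k:ℝ)/(m:ℕ)) ^ (1-s) with ht
  set r : ℝ := (((m:ℕ):ℝ)/k) ^ s with hr
  have htpos : 0 < t := rpow_pos_of_pos (by positivity) _
  have hrpos : 0 < r := rpow_pos_of_pos (by positivity) _
  have hc : (0:ℝ) < (k:ℝ)-1-s := by linarith
  have hcont : Continuous (fun u : ℝ => u ^ ((k:ℝ)-1-s) * (1-u)^l) := by
    apply Continuous.mul _ (by continuity)
    exact continuous_iff_continuousAt.2 fun u => Real.continuousAt_rpow_const u _ (Or.inr hc.le)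
  have hmono : ∫ u in (0:ℝ)..1, u ^ ((k:ℝ)-1-s) * (1-u)^l
      ≤ ∫ u in (0:ℝ)..1, ((s*t) * (u^(k-2) * (1-u)^l) + ((1-s)*r) * (u^(k-1) * (1-u)^l)) := by
    apply intervalIntegral.integral_mono_on (by norm_num)
      (hcont.intervalIntegrable _ _) (Continuous.intervalIntegrable (by continuity) _ _)
    intro u hu
    have := pointwise_amgm s hs hs1 k l m hk (by omega) (by omega) u hu.1 hu.2
    refine le_trans this (le_of_eq ?_)
    ring
  have hsplit : ∫ u in (0:ℝ)..1, ((s*t) * (u^(k-2) * (1-u)^l) + ((1-s)*r) * (u^(k-1) * (1-u)^l))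
      = (s*t) * (((k-2).factorial : ℝ) * l.factorial / ((k-2+l+1).factorial))
        + ((1-s)*r) * (((k-1).factorial : ℝ) * l.factorial / ((k-1+l+1).factorial)) := by
    rw [intervalIntegral.integral_add
        (Continuous.intervalIntegrable (by continuity) _ _)
        (Continuous.intervalIntegrable (by continuity) _ _),
      intervalIntegral.integral_const_mul, intervalIntegral.integral_const_mul,
      betaNat, betaNat]
  have e1 : k-2+l+1 = m-1 := by omega
  have e2 : k-1+l+1 = m := by omega
  refine le_trans (hmono.trans (le_of_eq hsplit)) ?_
  rw [e1, e2]
  -- final algebra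
  set A : ℝ := ((k-1).factorial : ℝ) * l.factorial / (m.factorial) with hA
  have hApos : 0 < A := by positivity
  have hkf : ((k-1).factorial : ℝ) = ((k:ℝ)-1) * ((k-2).factorial : ℝ) := by
    obtain ⟨j, hj⟩ : ∃ j, k - 1 = j + 1 := ⟨k-2, by omega⟩
    rw [hj, Nat.factorial_succ, show k-2 = j by omega]
    have : ((k:ℝ)-1) = (j+1 : ℕ) := by push_cast [← hj, Nat.cast_sub (by omega : 1 ≤ k)]; ring
    rw [this]; push_cast; ring
  have hmf : (m.factorial : ℝ) = (m:ℝ) * ((m-1).factorial : ℝ) := by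
    obtain ⟨j, hj⟩ : ∃ j, m = j + 1 := ⟨m-1, by omega⟩
    rw [hj, Nat.factorial_succ, show j+1-1 = j by omega]
    push_cast; ring
  have hterm1 : ((k-2).factorial : ℝ) * l.factorial / ((m-1).factorial)
      = ((m:ℝ)/((k:ℝ)-1)) * A := by
    rw [hA, hkf, hmf]
    have h1 : ((m-1).factorial : ℝ) ≠ 0 := by positivity
    have h2 : ((k:ℝ)-1) ≠ 0 := by linarith
    have h3 : (m:ℝ) ≠ 0 := by positivity
    field_simp
  rw [hterm1]
  have hmk : (0:ℝ) < ((m:ℕ):ℝ)/k := by positivity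
  have htr : t * ((m:ℕ):ℝ) = r * k := by
    have et : t = (((m:ℕ):ℝ)/k) ^ (s-1) := by
      rw [ht, show (k:ℝ)/((m:ℕ):ℝ) = (((m:ℕ):ℝ)/(k:ℝ))⁻¹ by rw [inv_div],
        Real.inv_rpow hmk.le, ← Real.rpow_neg hmk.le]
      norm_num
    have er : (((m:ℕ):ℝ)/k)^s = (((m:ℕ):ℝ)/k)^(s-1) * (((m:ℕ):ℝ)/k) := by
      have h := Real.rpow_add_one (ne_of_gt hmk) (s-1)
      rw [sub_add_cancel] at h
      exact h
    rw [et, hr, er]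
    have hk' : (k:ℝ) ≠ 0 := by positivity
    field_simp
  have hstep : s*t * (((m:ℝ)/((k:ℝ)-1)) * A) ≤ 2*s*(r*A) := by
    rw [show s*t * (((m:ℝ)/((k:ℝ)-1)) * A) = s*(t*((m:ℕ):ℝ))*A/((k:ℝ)-1) by ring, htr,
      div_le_iff₀ (by linarith : (0:ℝ) < (k:ℝ)-1)]
    have hsrA : 0 ≤ s*(r*A) := mul_nonneg hs.le (mul_nonneg hrpos.le hApos.le)
    calc s*(r*(k:ℝ))*A = (s*(r*A))*(k:ℝ) := by ring
      _ ≤ (s*(r*A))*(2*((k:ℝ)-1)) := mul_le_mul_of_nonneg_left (by linarith) hsrA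
      _ = 2*s*(r*A)*((k:ℝ)-1) := by ring
  have hpos2 : 0 ≤ (r*A) := mul_nonneg hrpos.le hApos.le
  have hpos3 : 0 ≤ (1-s)*(r*A) := mul_nonneg (by linarith) hpos2
  linarith [hstep, hpos3]

lemma sqrtFA (k l : ℕ) (hk : 2 ≤ k) (hl : 2 ≤ l) :
    Real.sqrt (((2*k+2*l+1).factorial : ℝ) / ((2*k+1).factorial * (2*l+1).factorial))
      * (((k-1).factorial : ℝ) * l.factorial / ((k+l).factorial))
    ≤ Real.sqrt 3 * ((k:ℝ)+l) ^ ((1:ℝ)/4) / ((l:ℝ) ^ ((1:ℝ)/4) * (k:ℝ) ^ ((5:ℝ)/4)) := by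
  have hk0 : (0:ℝ) < k := by exact_mod_cast Nat.lt_of_lt_of_le two_pos hk
  have hl0 : (0:ℝ) < l := by exact_mod_cast Nat.lt_of_lt_of_le two_pos hl
  have hm0 : (0:ℝ) < (k:ℝ)+l := by linarith
  set F : ℝ := ((2*k+2*l+1).factorial : ℝ) / ((2*k+1).factorial * (2*l+1).factorial) with hF
  set A : ℝ := ((k-1).factorial : ℝ) * l.factorial / ((k+l).factorial) with hAdef
  have hFpos : 0 ≤ F := by positivity
  have hApos : 0 ≤ A := by positivity
  set T : ℝ := Real.sqrt 3 * ((k:ℝ)+l) ^ ((1:ℝ)/4) / ((l:ℝ) ^ ((1:ℝ)/4) * (k:ℝ) ^ ((5:ℝ)/4)) with hT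
  have hTpos : 0 ≤ T := by positivity
  have hsq : ∀ x : ℝ, 0 ≤ x → (x ^ ((1:ℝ)/4))^2 = x ^ ((1:ℝ)/2) := by
    intro x hx
    rw [← Real.rpow_natCast (x ^ ((1:ℝ)/4)) 2, ← Real.rpow_mul hx]
    norm_num
  have hT2 : T^2 = 3 * Real.sqrt ((k:ℝ)+l) / (Real.sqrt k * Real.sqrt l * (k:ℝ)^2) := by
    rw [hT, div_pow, mul_pow, mul_pow, Real.sq_sqrt (by norm_num : (0:ℝ) ≤ 3),
      hsq _ hm0.le, hsq _ hl0.le]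
    have hk54 : ((k:ℝ) ^ ((5:ℝ)/4))^2 = (k:ℝ) ^ ((1:ℝ)/2) * (k:ℝ)^2 := by
      rw [← Real.rpow_natCast ((k:ℝ) ^ ((5:ℝ)/4)) 2, ← Real.rpow_mul hk0.le]
      rw [show (5:ℝ)/4 * (2:ℕ) = 1/2 + (2:ℕ) by push_cast; ring, Real.rpow_add hk0,
        Real.rpow_natCast]
    rw [hk54, Real.sqrt_eq_rpow, Real.sqrt_eq_rpow, Real.sqrt_eq_rpow]
    ring
  calc Real.sqrt F * A = Real.sqrt (F * A^2) := by
        rw [Real.sqrt_mul hFpos, Real.sqrt_sq hApos]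
    _ ≤ Real.sqrt (T^2) := by
        apply Real.sqrt_le_sqrt
        rw [hF, hAdef, fact_ident k l hk hl, hT2]
        exact Q_bound k l hk hl
    _ = T := Real.sqrt_sq hTpos

theorem boltzMu_le (s : ℝ) (hs : 0 < s) (hs1 : s < 1) :
    ∃ C > 0, ∀ k l : ℕ, 2 ≤ k → 2 ≤ l →
      boltzMu s k l ≤
        C * ((k : ℝ) + (l : ℝ)) ^ ((1:ℝ)/4 + s) /
          ((l : ℝ) ^ ((1:ℝ)/4) * (k : ℝ) ^ ((5:ℝ)/4 + s)) := by
  refine ⟨Real.sqrt 3, by positivity, fun k l hk hl => ?_⟩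
  have hk0 : (0:ℝ) < k := by exact_mod_cast Nat.lt_of_lt_of_le two_pos hk
  have hk2 : (2:ℝ) ≤ (k:ℝ) := by exact_mod_cast hk
  have hl0 : (0:ℝ) < l := by exact_mod_cast Nat.lt_of_lt_of_le two_pos hl
  have hm0 : (0:ℝ) < (k:ℝ)+l := by linarith
  have hc : (0:ℝ) < (k:ℝ)-1-s := by linarith
  rw [boltzMu, show 2*(k:ℝ) - 1 - 2*s = 2*((k:ℝ)-1-s)+1 by ring, trig_subst _ hc l,
    intervalIntegral.integral_const_mul]
  set c : ℝ := (k:ℝ)-1-s with hcdef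
  have hcont : Continuous (fun u : ℝ => u ^ c * (1-u)^l) := by
    apply Continuous.mul _ (by continuity)
    exact continuous_iff_continuousAt.2 fun u => Real.continuousAt_rpow_const u _ (Or.inr hc.le)
  have hJ1 : ∫ u in (0:ℝ)..(1/2:ℝ), u ^ c * (1-u)^l ≤ ∫ u in (0:ℝ)..1, u ^ c * (1-u)^l := by
    have hsplit := intervalIntegral.integral_add_adjacent_intervals
      (μ := volume) (a := (0:ℝ)) (b := (1/2:ℝ)) (c := (1:ℝ))
      (hcont.intervalIntegrable _ _) (hcont.intervalIntegrable _ _)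
    have hnn : 0 ≤ ∫ u in (1/2:ℝ)..1, u ^ c * (1-u)^l := by
      apply intervalIntegral.integral_nonneg (by norm_num)
      intro u hu
      have h1 : (0:ℝ) ≤ u := le_trans (by norm_num) hu.1
      have h2 : (0:ℝ) ≤ 1 - u := by linarith [hu.2]
      positivity
    linarith [hsplit]
  have hJ2 := int_bound s hs hs1 k l hk hl
  have hFA := sqrtFA k l hk hl
  set F : ℝ := ((2*k+2*l+1).factorial : ℝ) / ((2*k+1).factorial * (2*l+1).factorial) with hF
  have hFnn : 0 ≤ Real.sqrt F := Real.sqrt_nonneg _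
  set A : ℝ := ((k-1).factorial : ℝ) * l.factorial / ((k+l).factorial) with hAdef
  have hchain : Real.sqrt F * ((1/2:ℝ) * ∫ u in (0:ℝ)..(1/2:ℝ), u ^ c * (1-u)^l)
      ≤ Real.sqrt F * ((1/2:ℝ) * (2 * ((((k+l:ℕ)):ℝ)/k) ^ s * A)) := by
    apply mul_le_mul_of_nonneg_left _ hFnn
    apply mul_le_mul_of_nonneg_left _ (by norm_num)
    exact le_trans hJ1 hJ2
  refine le_trans hchain ?_
  have hrw : Real.sqrt F * ((1/2:ℝ) * (2 * ((((k+l:ℕ)):ℝ)/k) ^ s * A))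
      = ((((k:ℝ)+l)/k) ^ s) * (Real.sqrt F * A) := by
    push_cast
    ring
  rw [hrw]
  have hbound : ((((k:ℝ)+l)/k) ^ s) * (Real.sqrt F * A)
      ≤ ((((k:ℝ)+l)/k) ^ s) * (Real.sqrt 3 * ((k:ℝ)+l) ^ ((1:ℝ)/4) / ((l:ℝ) ^ ((1:ℝ)/4) * (k:ℝ) ^ ((5:ℝ)/4))) := by
    apply mul_le_mul_of_nonneg_left hFA (Real.rpow_nonneg (by positivity) _)
  refine le_trans hbound (le_of_eq ?_)
  rw [Real.div_rpow hm0.le hk0.le, Real.rpow_add hm0, Real.rpow_add hk0]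
  have h1 : (0:ℝ) < ((k:ℝ)+l) ^ s := Real.rpow_pos_of_pos hm0 _
  have h2 : (0:ℝ) < (k:ℝ) ^ s := Real.rpow_pos_of_pos hk0 _
  have h3 : (0:ℝ) < (l:ℝ) ^ ((1:ℝ)/4) := Real.rpow_pos_of_pos hl0 _
  have h4 : (0:ℝ) < (k:ℝ) ^ ((5:ℝ)/4) := Real.rpow_pos_of_pos hk0 _
  field_simp
end
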